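/- arXiv:2510.26679 — 2 statements merged into one kernel-verified Lean document; each statement's English description precedes it below -/
import Mathlib

section
/- Let M, M' ∈ R^{n×n} be symmetric with E = M' − M satisfying sqrt(Σ_{i,j}|(EE^⊤)_{ij}|) ≤ Δ, and let P, P' be the orthogonal projectors onto the spans of the top r singular vectors of M and M' respectively. If σ_r(M) − σ_{r+1}(M) > 2Δ, then ||P − P'||_F ≤ 4Δ·sqrt(r·μ_r(M)/n) / (σ_r(M) − σ_{r+1}(M)). -/
open Matrix BigOperators

namespace Stmt8

variable {n : ℕ}

/-- Orthonormal rows give orthonormal columns (completeness). -/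
lemma complete_of_ortho (w : Fin n → Fin n → ℝ)
    (h : ∀ k l, ∑ i, w k i * w l i = if k = l then (1:ℝ) else 0) (i j : Fin n) :
    ∑ k, w k i * w k j = if i = j then (1:ℝ) else 0 := by
  have h1 : (Matrix.of w) * (Matrix.of w)ᵀ = 1 := by
    ext k l
    simpa [Matrix.mul_apply, Matrix.one_apply] using h k l
  have h2 := mul_eq_one_comm.mp h1
  have := congrFun (congrFun h2 i) j
  simpa [Matrix.mul_apply, Matrix.one_apply] using this

/-- Generalized Parseval identity for a complete orthonormal system. -/
lemma parseval2 (w : Fin n → Fin n → ℝ)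
    (h : ∀ i j, ∑ k, w k i * w k j = if i = j then (1:ℝ) else 0)
    (y z : Fin n → ℝ) :
    ∑ l, (∑ j, y j * w l j) * (∑ j, z j * w l j) = ∑ j, y j * z j := by
  have key : ∀ j j' : Fin n, ∑ l, (y j * w l j) * (z j' * w l j') =
      y j * z j' * (if j = j' then (1:ℝ) else 0) := by
    intro j j'
    rw [← h j j', Finset.mul_sum]
    congr 1; ext l; ring
  calc ∑ l, (∑ j, y j * w l j) * (∑ j, z j * w l j)
      = ∑ l, ∑ j, ∑ j', (y j * w l j) * (z j' * w l j') := by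
        refine Finset.sum_congr rfl fun l _ => ?_
        rw [Finset.sum_mul_sum]
    _ = ∑ j, ∑ j', ∑ l, (y j * w l j) * (z j' * w l j') := by
        rw [Finset.sum_comm]
        exact Finset.sum_congr rfl fun j _ => Finset.sum_comm
    _ = ∑ j, ∑ j', y j * z j' * (if j = j' then (1:ℝ) else 0) := by
        simp_rw [key]
    _ = ∑ j, y j * z j := by
        refine Finset.sum_congr rfl fun j _ => ?_
        simp [Finset.sum_ite_eq]



lemma cs_sum (f g : Fin n → ℝ) :
    ∑ i, f i * g i ≤ Real.sqrt (∑ i, f i ^ 2) * Real.sqrt (∑ i, g i ^ 2) := by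
  have h1 := Finset.sum_mul_sq_le_sq_mul_sq Finset.univ f g
  calc ∑ i, f i * g i ≤ |∑ i, f i * g i| := le_abs_self _
    _ = Real.sqrt ((∑ i, f i * g i) ^ 2) := (Real.sqrt_sq_eq_abs _).symm
    _ ≤ Real.sqrt ((∑ i, f i ^ 2) * ∑ i, g i ^ 2) := Real.sqrt_le_sqrt h1
    _ = _ := Real.sqrt_mul (by positivity) _

lemma sqrt_triangle (f g : Fin n → ℝ) :
    Real.sqrt (∑ i, (f i + g i) ^ 2) ≤
      Real.sqrt (∑ i, f i ^ 2) + Real.sqrt (∑ i, g i ^ 2) := by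
  set A := Real.sqrt (∑ i, f i ^ 2) with hA
  set B := Real.sqrt (∑ i, g i ^ 2) with hB
  have hA2 : A ^ 2 = ∑ i, f i ^ 2 := Real.sq_sqrt (by positivity)
  have hB2 : B ^ 2 = ∑ i, g i ^ 2 := Real.sq_sqrt (by positivity)
  have key : ∑ i, (f i + g i) ^ 2 ≤ (A + B) ^ 2 := by
    have e1 : ∑ i, (f i + g i) ^ 2
        = (∑ i, f i ^ 2) + 2 * (∑ i, f i * g i) + ∑ i, g i ^ 2 := by
      rw [Finset.mul_sum, ← Finset.sum_add_distrib, ← Finset.sum_add_distrib]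
      exact Finset.sum_congr rfl fun i _ => by ring
    have := cs_sum f g
    nlinarith [this, hA2, hB2]
  calc Real.sqrt (∑ i, (f i + g i) ^ 2) ≤ Real.sqrt ((A + B) ^ 2) :=
        Real.sqrt_le_sqrt key
    _ = A + B := Real.sqrt_sq (by positivity)

/-- Rearrangement of a quadruple sum. -/
lemma quad_swap (S : Finset (Fin n)) (A B : Fin n → Fin n → ℝ) :
    ∑ k ∈ S, ∑ j, (∑ i, A k i * B i j) ^ 2 =
      ∑ i, ∑ i', (∑ k ∈ S, A k i * A k i') * (∑ j, B i j * B i' j) := by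
  calc ∑ k ∈ S, ∑ j, (∑ i, A k i * B i j) ^ 2
      = ∑ k ∈ S, ∑ j, ∑ i, ∑ i', (A k i * B i j) * (A k i' * B i' j) := by
        refine Finset.sum_congr rfl fun k _ => Finset.sum_congr rfl fun j _ => ?_
        rw [sq, Finset.sum_mul_sum]
    _ = ∑ k ∈ S, ∑ i, ∑ i', ∑ j, (A k i * B i j) * (A k i' * B i' j) := by
        refine Finset.sum_congr rfl fun k _ => ?_
        rw [Finset.sum_comm]
        exact Finset.sum_congr rfl fun i _ => Finset.sum_comm
    _ = ∑ i, ∑ k ∈ S, ∑ i', ∑ j, (A k i * B i j) * (A k i' * B i' j) :=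
        Finset.sum_comm
    _ = ∑ i, ∑ i', ∑ k ∈ S, ∑ j, (A k i * B i j) * (A k i' * B i' j) := by
        exact Finset.sum_congr rfl fun i _ => Finset.sum_comm
    _ = ∑ i, ∑ i', (∑ k ∈ S, A k i * A k i') * (∑ j, B i j * B i' j) := by
        refine Finset.sum_congr rfl fun i _ => Finset.sum_congr rfl fun i' _ => ?_
        rw [Finset.sum_mul_sum]
        exact Finset.sum_congr rfl fun k _ => Finset.sum_congr rfl fun j _ => by ring

/-- Frobenius pairing of two "projector-shaped" matrices. -/
lemma proj_inner (S S' : Finset (Fin n)) (w w' : Fin n → Fin n → ℝ) :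
    ∑ i, ∑ j, (∑ k ∈ S, w k i * w k j) * (∑ l ∈ S', w' l i * w' l j) =
      ∑ k ∈ S, ∑ l ∈ S', (∑ i, w k i * w' l i) ^ 2 := by
  calc ∑ i, ∑ j, (∑ k ∈ S, w k i * w k j) * (∑ l ∈ S', w' l i * w' l j)
      = ∑ i, ∑ j, ∑ k ∈ S, ∑ l ∈ S', (w k i * w k j) * (w' l i * w' l j) := by
        refine Finset.sum_congr rfl fun i _ => Finset.sum_congr rfl fun j _ => ?_
        rw [Finset.sum_mul_sum]
    _ = ∑ i, ∑ k ∈ S, ∑ j, ∑ l ∈ S', (w k i * w k j) * (w' l i * w' l j) :=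
        Finset.sum_congr rfl fun i _ => Finset.sum_comm
    _ = ∑ k ∈ S, ∑ i, ∑ j, ∑ l ∈ S', (w k i * w k j) * (w' l i * w' l j) :=
        Finset.sum_comm
    _ = ∑ k ∈ S, ∑ i, ∑ l ∈ S', ∑ j, (w k i * w k j) * (w' l i * w' l j) :=
        Finset.sum_congr rfl fun k _ => Finset.sum_congr rfl fun i _ => Finset.sum_comm
    _ = ∑ k ∈ S, ∑ l ∈ S', ∑ i, ∑ j, (w k i * w k j) * (w' l i * w' l j) :=
        Finset.sum_congr rfl fun k _ => Finset.sum_comm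
    _ = ∑ k ∈ S, ∑ l ∈ S', (∑ i, w k i * w' l i) ^ 2 := by
        refine Finset.sum_congr rfl fun k _ => Finset.sum_congr rfl fun l _ => ?_
        rw [sq, Finset.sum_mul_sum]
        exact Finset.sum_congr rfl fun i _ => Finset.sum_congr rfl fun j _ => by ring

/-- SVD action on right singular vectors. -/
lemma svd_mulvec (σ : Fin n → ℝ) (u v : Fin n → Fin n → ℝ)
    (M : Matrix (Fin n) (Fin n) ℝ)
    (hM : ∀ i j, M i j = ∑ k, σ k * u k i * v k j)
    (hvv : ∀ k l, ∑ i, v k i * v l i = if k = l then (1:ℝ) else 0)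
    (k : Fin n) (i : Fin n) :
    ∑ j, M i j * v k j = σ k * u k i := by
  calc ∑ j, M i j * v k j = ∑ j, ∑ m, (σ m * u m i) * (v m j * v k j) := by
        refine Finset.sum_congr rfl fun j _ => ?_
        rw [hM, Finset.sum_mul]
        exact Finset.sum_congr rfl fun m _ => by ring
    _ = ∑ m, (σ m * u m i) * ∑ j, v m j * v k j := by
        rw [Finset.sum_comm]
        exact Finset.sum_congr rfl fun m _ => (Finset.mul_sum _ _ _).symm
    _ = ∑ m, (σ m * u m i) * (if m = k then (1:ℝ) else 0) := by simp_rw [hvv]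
    _ = σ k * u k i := by simp

/-- SVD action on left singular vectors (transposed version). -/
lemma svd_vecmul (σ : Fin n → ℝ) (u v : Fin n → Fin n → ℝ)
    (M : Matrix (Fin n) (Fin n) ℝ)
    (hM : ∀ i j, M i j = ∑ k, σ k * u k i * v k j)
    (huu : ∀ k l, ∑ i, u k i * u l i = if k = l then (1:ℝ) else 0)
    (k : Fin n) (j : Fin n) :
    ∑ i, M i j * u k i = σ k * v k j := by
  have := svd_mulvec σ v u (Matrix.of fun i j => M j i)
    (fun i j => by simp only [Matrix.of_apply]; rw [hM]; exact Finset.sum_congr rfl fun m _ => by ring)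
    huu k j
  simpa using this



lemma sq_expand {ι : Type*} [Fintype ι] (c : ι → ℝ) (w : ι → Fin n → ℝ) :
    ∑ i, (∑ j, c j * w j i) ^ 2 =
      ∑ j, ∑ j', (c j * c j') * (∑ i, w j i * w j' i) := by
  calc ∑ i, (∑ j, c j * w j i) ^ 2
      = ∑ i, ∑ j, ∑ j', (c j * w j i) * (c j' * w j' i) := by
        refine Finset.sum_congr rfl fun i _ => ?_
        rw [sq, Finset.sum_mul_sum]
    _ = ∑ j, ∑ i, ∑ j', (c j * w j i) * (c j' * w j' i) := Finset.sum_comm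
    _ = ∑ j, ∑ j', ∑ i, (c j * w j i) * (c j' * w j' i) :=
        Finset.sum_congr rfl fun j _ => Finset.sum_comm
    _ = ∑ j, ∑ j', (c j * c j') * (∑ i, w j i * w j' i) := by
        refine Finset.sum_congr rfl fun j _ => Finset.sum_congr rfl fun j' _ => ?_
        rw [Finset.mul_sum]
        exact Finset.sum_congr rfl fun i _ => by ring

lemma weyl {r : ℕ} (hrn : r < n) (M M' : Matrix (Fin n) (Fin n) ℝ)
    (σ σ' : Fin n → ℝ) (u v u' v' : Fin n → Fin n → ℝ)
    (hσA : Antitone σ) (hσ0 : ∀ k, 0 ≤ σ k)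
    (hσ'A : Antitone σ') (hσ'0 : ∀ k, 0 ≤ σ' k)
    (huu : ∀ k l, ∑ i, u k i * u l i = if k = l then (1:ℝ) else 0)
    (hvv : ∀ k l, ∑ i, v k i * v l i = if k = l then (1:ℝ) else 0)
    (hMuv : ∀ i j, M i j = ∑ k, σ k * u k i * v k j)
    (huu' : ∀ k l, ∑ i, u' k i * u' l i = if k = l then (1:ℝ) else 0)
    (hvv' : ∀ k l, ∑ i, v' k i * v' l i = if k = l then (1:ℝ) else 0)
    (hM'uv : ∀ i j, M' i j = ∑ k, σ' k * u' k i * v' k j)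
    (Δ : ℝ) (hΔ0 : 0 ≤ Δ)
    (hEF : ∑ i, ∑ j, (M' i j - M i j) ^ 2 ≤ Δ ^ 2) :
    σ' ⟨r, hrn⟩ ≤ σ ⟨r, hrn⟩ + Δ := by
  set rb : Fin n := ⟨r, hrn⟩ with hrb
  -- an embedding of the first r+1 indices
  have hle : ∀ j : Fin (r + 1), (j : ℕ) < n := fun j => lt_of_lt_of_le j.2 hrn
  set e : Fin (r + 1) → Fin n := fun j => ⟨j, hle j⟩ with he
  set e2 : Fin r → Fin n := fun k => ⟨k, lt_trans k.2 hrn⟩ with he2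
  -- a nonzero combination of the first r+1 rows of v' orthogonal to first r rows of v
  set vecs : Fin (r + 1) → (Fin r → ℝ) :=
    fun j => fun k => ∑ i, v (e2 k) i * v' (e j) i with hvecs
  have hdep : ¬ LinearIndependent ℝ vecs := by
    intro hLI
    have h1 := hLI.fintype_card_le_finrank
    rw [Module.finrank_fin_fun, Fintype.card_fin] at h1
    omega
  obtain ⟨c, hcsum, j0, hcj0⟩ := Fintype.not_linearIndependent_iff.mp hdep
  set x : Fin n → ℝ := fun i => ∑ j, c j * v' (e j) i with hx
  set S : ℝ := ∑ j, c j ^ 2 with hS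
  have hSpos : 0 < S := by
    refine Finset.sum_pos' (fun j _ => sq_nonneg _) ⟨j0, Finset.mem_univ _, ?_⟩
    exact lt_of_le_of_ne (sq_nonneg _) (Ne.symm (pow_ne_zero 2 hcj0))
  have einj : ∀ j j' : Fin (r+1), (e j = e j') ↔ j = j' := by
    intro j j'
    constructor
    · intro h
      have h2 := congrArg Fin.val h
      have h3 : (j : ℕ) = (j' : ℕ) := h2
      exact Fin.val_injective h3
    · intro h; rw [h]
  have hx2 : ∑ i, x i ^ 2 = S := by
    rw [hx]
    simp only
    rw [sq_expand c (fun j => v' (e j))]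
    have : ∀ j j' : Fin (r+1), (c j * c j') * (∑ i, v' (e j) i * v' (e j') i)
        = (c j * c j') * (if j = j' then (1:ℝ) else 0) := by
      intro j j'; rw [hvv' (e j) (e j')]
      exact congrArg _ (if_congr (einj j j') rfl rfl)
    simp_rw [this]
    simp [hS, sq]
  -- norm of M'x
  have hM'xi : ∀ i, ∑ t, M' i t * x t = ∑ j, (c j * σ' (e j)) * u' (e j) i := by
    intro i
    rw [hx]
    simp only
    calc ∑ t, M' i t * ∑ j, c j * v' (e j) t
        = ∑ t, ∑ j, c j * (M' i t * v' (e j) t) := by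
          refine Finset.sum_congr rfl fun t _ => ?_
          rw [Finset.mul_sum]
          exact Finset.sum_congr rfl fun j _ => by ring
      _ = ∑ j, c j * ∑ t, M' i t * v' (e j) t := by
          rw [Finset.sum_comm]
          exact Finset.sum_congr rfl fun j _ => (Finset.mul_sum _ _ _).symm
      _ = ∑ j, (c j * σ' (e j)) * u' (e j) i := by
          refine Finset.sum_congr rfl fun j _ => ?_
          rw [svd_mulvec σ' u' v' M' hM'uv hvv']
          ring
  have hM'x2 : (σ' rb) ^ 2 * S ≤ ∑ i, (∑ t, M' i t * x t) ^ 2 := by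
    simp_rw [hM'xi]
    rw [sq_expand (fun j => c j * σ' (e j)) (fun j => u' (e j))]
    have : ∀ j j' : Fin (r+1),
        ((c j * σ' (e j)) * (c j' * σ' (e j'))) * (∑ i, u' (e j) i * u' (e j') i)
        = ((c j * σ' (e j)) * (c j' * σ' (e j'))) * (if j = j' then (1:ℝ) else 0) := by
      intro j j'; rw [huu' (e j) (e j')]
      exact congrArg _ (if_congr (einj j j') rfl rfl)
    simp_rw [this]
    simp only [mul_ite, mul_one, mul_zero, Finset.sum_ite_eq, Finset.mem_univ, if_true]
    rw [hS, Finset.mul_sum]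
    refine Finset.sum_le_sum fun j _ => ?_
    have h1 : σ' rb ≤ σ' (e j) := hσ'A (by rw [Fin.le_def]; exact j.is_le)
    have h2 : 0 ≤ σ' rb := hσ'0 _
    have h3 : σ' rb ^ 2 ≤ σ' (e j) ^ 2 := pow_le_pow_left₀ h2 h1 2
    nlinarith [sq_nonneg (c j), h3]
  -- norm of Mx
  have hcomp_v := complete_of_ortho v hvv
  have hd0 : ∀ k : Fin r, ∑ t, v (e2 k) t * x t = 0 := by
    intro k
    have h1 : ∑ t, v (e2 k) t * x t = ∑ j, c j * vecs j k := by
      rw [hx]; simp only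
      calc ∑ t, v (e2 k) t * ∑ j, c j * v' (e j) t
          = ∑ t, ∑ j, c j * (v (e2 k) t * v' (e j) t) := by
            refine Finset.sum_congr rfl fun t _ => ?_
            rw [Finset.mul_sum]
            exact Finset.sum_congr rfl fun j _ => by ring
        _ = ∑ j, c j * ∑ t, v (e2 k) t * v' (e j) t := by
            rw [Finset.sum_comm]
            exact Finset.sum_congr rfl fun j _ => (Finset.mul_sum _ _ _).symm
        _ = ∑ j, c j * vecs j k := rfl
    rw [h1]
    have := congrFun hcsum k
    simpa [Finset.sum_apply] using this
  have hMxi : ∀ i, ∑ t, M i t * x t = ∑ k, (σ k * (∑ t, v k t * x t)) * u k i := by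
    intro i
    calc ∑ t, M i t * x t = ∑ t, ∑ k, (σ k * u k i) * (v k t * x t) := by
          refine Finset.sum_congr rfl fun t _ => ?_
          rw [hMuv, Finset.sum_mul]
          exact Finset.sum_congr rfl fun k _ => by ring
      _ = ∑ k, ∑ t, (σ k * u k i) * (v k t * x t) := Finset.sum_comm
      _ = ∑ k, (σ k * (∑ t, v k t * x t)) * u k i := by
          refine Finset.sum_congr rfl fun k _ => ?_
          rw [Finset.mul_sum, Finset.sum_mul]
          exact Finset.sum_congr rfl fun t _ => by ring
  have hparse : ∑ k, (∑ t, v k t * x t) ^ 2 = ∑ t, x t ^ 2 := by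
    have := parseval2 v hcomp_v x x
    calc ∑ k, (∑ t, v k t * x t) ^ 2
        = ∑ k, (∑ t, x t * v k t) * (∑ t, x t * v k t) := by
          refine Finset.sum_congr rfl fun k _ => ?_
          rw [sq]
          congr 1 <;> exact Finset.sum_congr rfl fun t _ => by ring
      _ = ∑ t, x t * x t := this
      _ = ∑ t, x t ^ 2 := by simp [sq]
  have hMx2 : ∑ i, (∑ t, M i t * x t) ^ 2 ≤ (σ rb) ^ 2 * S := by
    simp_rw [hMxi]
    rw [sq_expand (fun k => σ k * (∑ t, v k t * x t)) u]
    have : ∀ k k' : Fin n,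
        ((σ k * (∑ t, v k t * x t)) * (σ k' * (∑ t, v k' t * x t))) * (∑ i, u k i * u k' i)
        = ((σ k * (∑ t, v k t * x t)) * (σ k' * (∑ t, v k' t * x t))) * (if k = k' then (1:ℝ) else 0) := by
      intro k k'; rw [huu k k']
    simp_rw [this]
    simp only [mul_ite, mul_one, mul_zero, Finset.sum_ite_eq, Finset.mem_univ, if_true]
    calc ∑ k, (σ k * (∑ t, v k t * x t)) * (σ k * (∑ t, v k t * x t))
        = ∑ k, (σ k)^2 * (∑ t, v k t * x t)^2 := by
          exact Finset.sum_congr rfl fun k _ => by ring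
      _ ≤ ∑ k, (σ rb)^2 * (∑ t, v k t * x t)^2 := by
          refine Finset.sum_le_sum fun k _ => ?_
          by_cases hk : (k : ℕ) < r
          · have : ∑ t, v k t * x t = 0 := by
              have := hd0 ⟨k, hk⟩
              simpa [he2] using this
            rw [this]
            simp
          · have h1 : σ k ≤ σ rb := hσA (by rw [Fin.le_def]; exact Nat.le_of_not_lt hk)
            have h2 : 0 ≤ σ k := hσ0 _
            exact mul_le_mul_of_nonneg_right (pow_le_pow_left₀ h2 h1 2) (sq_nonneg _)
      _ = (σ rb)^2 * ∑ k, (∑ t, v k t * x t)^2 := (Finset.mul_sum _ _ _).symm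
      _ = (σ rb)^2 * S := by rw [hparse, hx2]
  -- norm of Ex
  have hEx2 : ∑ i, (∑ t, (M' i t - M i t) * x t) ^ 2 ≤ Δ ^ 2 * S := by
    calc ∑ i, (∑ t, (M' i t - M i t) * x t) ^ 2
        ≤ ∑ i, (∑ t, (M' i t - M i t) ^ 2) * (∑ t, x t ^ 2) := by
          refine Finset.sum_le_sum fun i _ => ?_
          exact Finset.sum_mul_sq_le_sq_mul_sq Finset.univ _ _
      _ = (∑ i, ∑ t, (M' i t - M i t) ^ 2) * S := by
          rw [Finset.sum_mul]
          exact Finset.sum_congr rfl fun i _ => by rw [hx2]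
      _ ≤ Δ ^ 2 * S := by
          apply mul_le_mul_of_nonneg_right hEF hSpos.le
  -- triangle inequality
  have hsplit : ∀ i, ∑ t, M' i t * x t
      = (∑ t, M i t * x t) + (∑ t, (M' i t - M i t) * x t) := by
    intro i
    rw [← Finset.sum_add_distrib]
    exact Finset.sum_congr rfl fun t _ => by ring
  have htri : Real.sqrt (∑ i, (∑ t, M' i t * x t) ^ 2)
      ≤ Real.sqrt (∑ i, (∑ t, M i t * x t) ^ 2)
        + Real.sqrt (∑ i, (∑ t, (M' i t - M i t) * x t) ^ 2) := by
    simp_rw [hsplit]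
    exact sqrt_triangle _ _
  have hσ'rb : σ' rb * Real.sqrt S ≤ (σ rb + Δ) * Real.sqrt S := by
    have l1 : σ' rb * Real.sqrt S = Real.sqrt ((σ' rb) ^ 2 * S) := by
      rw [Real.sqrt_mul (sq_nonneg _), Real.sqrt_sq (hσ'0 _)]
    have l2 : Real.sqrt (∑ i, (∑ t, M i t * x t) ^ 2) ≤ σ rb * Real.sqrt S := by
      rw [show σ rb * Real.sqrt S = Real.sqrt ((σ rb)^2 * S) by
        rw [Real.sqrt_mul (sq_nonneg _), Real.sqrt_sq (hσ0 _)]]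
      exact Real.sqrt_le_sqrt hMx2
    have l3 : Real.sqrt (∑ i, (∑ t, (M' i t - M i t) * x t) ^ 2) ≤ Δ * Real.sqrt S := by
      rw [show Δ * Real.sqrt S = Real.sqrt (Δ^2 * S) by
        rw [Real.sqrt_mul (sq_nonneg _), Real.sqrt_sq hΔ0]]
      exact Real.sqrt_le_sqrt hEx2
    calc σ' rb * Real.sqrt S = Real.sqrt ((σ' rb) ^ 2 * S) := l1
      _ ≤ Real.sqrt (∑ i, (∑ t, M' i t * x t) ^ 2) := Real.sqrt_le_sqrt hM'x2
      _ ≤ _ := htri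
      _ ≤ (σ rb + Δ) * Real.sqrt S := by linarith
  have hsq : 0 < Real.sqrt S := Real.sqrt_pos.mpr hSpos
  have := le_of_mul_le_mul_right hσ'rb hsq
  linarith


lemma swap_mul (A : Fin n → Fin n → ℝ) (x y : Fin n → ℝ) :
    ∑ j, (∑ i, x i * A i j) * y j = ∑ i, x i * (∑ j, A i j * y j) := by
  calc ∑ j, (∑ i, x i * A i j) * y j = ∑ j, ∑ i, x i * (A i j * y j) := by
        refine Finset.sum_congr rfl fun j _ => ?_
        rw [Finset.sum_mul]
        exact Finset.sum_congr rfl fun i _ => by ring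
    _ = ∑ i, ∑ j, x i * (A i j * y j) := Finset.sum_comm
    _ = ∑ i, x i * (∑ j, A i j * y j) :=
        Finset.sum_congr rfl fun i _ => (Finset.mul_sum _ _ _).symm


end Stmt8


/-- `projOfTopSV M σ r P` : `σ` lists the singular values of `M` in
nonincreasing order (via a full SVD with orthonormal `u`, `v`) and `P` is the
orthogonal projector onto the span of the top `r` left singular vectors. -/
def projOfTopSV {n : ℕ} (M : Matrix (Fin n) (Fin n) ℝ) (σ : Fin n → ℝ) (r : ℕ)
    (P : Matrix (Fin n) (Fin n) ℝ) : Prop :=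
  Antitone σ ∧ (∀ k, 0 ≤ σ k) ∧
  ∃ u v : Fin n → Fin n → ℝ,
    (∀ k l, ∑ i, u k i * u l i = if k = l then (1:ℝ) else 0) ∧
    (∀ k l, ∑ i, v k i * v l i = if k = l then (1:ℝ) else 0) ∧
    (∀ i j, M i j = ∑ k, σ k * u k i * v k j) ∧
    (∀ i j, P i j = ∑ k : Fin n, if (k : ℕ) < r then u k i * u k j else 0)

set_option maxHeartbeats 1000000 in
open Stmt8 in
/-- Sensitivity of projectors.  For symmetric `M, M'` with
`E = M' − M` satisfying `sqrt(∑|(EEᵀ)_{ij}|) ≤ Δ` and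
`σ_r(M) − σ_{r+1}(M) > 2Δ`, the projectors `P, P'` onto the top-`r` singular
subspaces satisfy `‖P − P'‖_F ≤ 4Δ·sqrt(r·μ_r(M)/n)/(σ_r(M) − σ_{r+1}(M))`,
where `μ_r(M) = (n/r)·‖P‖_∞`. -/
theorem stmt_8 (n r : ℕ) (hr0 : 0 < r) (hrn : r < n)
    (M M' P P' : Matrix (Fin n) (Fin n) ℝ) (hM : M.IsSymm) (hM' : M'.IsSymm)
    (σ σ' : Fin n → ℝ)
    (h1 : projOfTopSV M σ r P) (h2 : projOfTopSV M' σ' r P')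
    (Δ : ℝ)
    (hΔ : Real.sqrt (∑ i, ∑ j, |((M' - M) * (M' - M)ᵀ) i j|) ≤ Δ)
    (hgap : 2 * Δ <
      σ ⟨r - 1, lt_of_le_of_lt (Nat.pred_le r) hrn⟩ - σ ⟨r, hrn⟩) :
    Real.sqrt (∑ i, ∑ j, (P i j - P' i j) ^ 2) ≤
      4 * Δ * Real.sqrt (r * ((n / r : ℝ) * ⨆ i, ⨆ j, |P i j|) / n) /
        (σ ⟨r - 1, lt_of_le_of_lt (Nat.pred_le r) hrn⟩ - σ ⟨r, hrn⟩) := by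

  obtain ⟨hσA, hσ0, u, v, huu, hvv, hMuv, hPu⟩ := h1
  obtain ⟨hσ'A, hσ'0, u', v', huu', hvv', hM'uv, hP'u⟩ := h2
  set ra : Fin n := ⟨r - 1, lt_of_le_of_lt (Nat.pred_le r) hrn⟩ with hradef
  set rb : Fin n := ⟨r, hrn⟩ with hrbdef
  set s : ℝ := ⨆ i, ⨆ j, |P i j| with hsdef
  set E : Fin n → Fin n → ℝ := fun i j => M' i j - M i j with hEdef
  set F : Fin n → Fin n → ℝ := fun i j => ∑ t, E i t * E j t with hFdef
  have hΔ0 : 0 ≤ Δ := le_trans (Real.sqrt_nonneg _) hΔ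
  have hgpos : 0 < σ ra - σ rb := lt_of_le_of_lt (by positivity) hgap
  have hMs : ∀ i j, M i j = M j i := fun i j => Matrix.IsSymm.apply hM j i
  have hM's : ∀ i j, M' i j = M' j i := fun i j => Matrix.IsSymm.apply hM' j i
  have hEs : ∀ i j, E i j = E j i := by
    intro i j
    simp only [hEdef]
    rw [hMs i j, hM's i j]
  -- the matrix entries of (M'-M)(M'-M)ᵀ are F
  have habs : ∀ i j : Fin n, ((M' - M) * (M' - M)ᵀ) i j = F i j := by
    intro i j
    simp [Matrix.mul_apply, hFdef, hEdef, Matrix.sub_apply, Matrix.transpose_apply]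
  have hFsum : ∑ i, ∑ j, |F i j| ≤ Δ ^ 2 := by
    have h0 : (0:ℝ) ≤ ∑ i, ∑ j, |F i j| := by positivity
    have hΔ' : Real.sqrt (∑ i, ∑ j, |F i j|) ≤ Δ := by
      have heq : (∑ i, ∑ j, |F i j|) = ∑ i, ∑ j, |((M' - M) * (M' - M)ᵀ) i j| := by
        refine Finset.sum_congr rfl fun i _ => Finset.sum_congr rfl fun j _ => ?_
        rw [habs]
      rw [heq]
      exact hΔ
    have h2 := pow_le_pow_left₀ (Real.sqrt_nonneg _) hΔ' 2
    rwa [Real.sq_sqrt h0] at h2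
  have hEF : ∑ i, ∑ j, (M' i j - M i j) ^ 2 ≤ Δ ^ 2 := by
    calc ∑ i, ∑ j, (M' i j - M i j) ^ 2 = ∑ i, F i i := by
          refine Finset.sum_congr rfl fun i _ => ?_
          simp [hFdef, hEdef, sq]
      _ ≤ ∑ i, ∑ j, |F i j| := by
          refine Finset.sum_le_sum fun i _ => ?_
          exact le_trans (le_abs_self _)
            (Finset.single_le_sum (f := fun j => |F i j|) (fun j _ => abs_nonneg _)
              (Finset.mem_univ i))
      _ ≤ Δ ^ 2 := hFsum
  have hWeyl : σ' rb ≤ σ rb + Δ :=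
    weyl hrn M M' σ σ' u v u' v' hσA hσ0 hσ'A hσ'0 huu hvv hMuv huu' hvv' hM'uv Δ hΔ0 hEF
  -- basic SVD action facts
  have Mv := fun k i => svd_mulvec σ u v M hMuv hvv k i
  have Mu := fun k j => svd_vecmul σ u v M hMuv huu k j
  have M'v := fun k i => svd_mulvec σ' u' v' M' hM'uv hvv' k i
  have M'u := fun k j => svd_vecmul σ' u' v' M' hM'uv huu' k j
  have Mu2 : ∀ k i, ∑ j, M i j * u k j = σ k * v k i := by
    intro k i
    calc ∑ j, M i j * u k j = ∑ j, M j i * u k j :=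
          Finset.sum_congr rfl fun j _ => by rw [hMs i j]
      _ = σ k * v k i := Mu k i
  have ucomp := complete_of_ortho u huu
  have vcomp := complete_of_ortho v hvv
  have u'comp := complete_of_ortho u' huu'
  have v'comp := complete_of_ortho v' hvv'
  -- orthogonality of u_m and v_k across the spectral gap (needs symmetry of M)
  have orth : ∀ m k : Fin n, σ m ^ 2 ≠ σ k ^ 2 → ∑ i, u m i * v k i = 0 := by
    intro m k hne
    have MMv : ∀ i, ∑ j, M i j * (σ k * u k j) = σ k ^ 2 * v k i := by
      intro i
      calc ∑ j, M i j * (σ k * u k j) = σ k * ∑ j, M i j * u k j := by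
            rw [Finset.mul_sum]
            exact Finset.sum_congr rfl fun j _ => by ring
        _ = σ k ^ 2 * v k i := by rw [Mu2]; ring
    have MMu : ∀ i, ∑ j, M i j * (σ m * v m j) = σ m ^ 2 * u m i := by
      intro i
      calc ∑ j, M i j * (σ m * v m j) = σ m * ∑ j, M i j * v m j := by
            rw [Finset.mul_sum]
            exact Finset.sum_congr rfl fun j _ => by ring
        _ = σ m ^ 2 * u m i := by rw [Mv]; ring
    have pair : ∀ x y : Fin n → ℝ,
        ∑ i, x i * (∑ j, M i j * y j) = ∑ i, (∑ j, M i j * x j) * y i := by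
      intro x y
      calc ∑ i, x i * (∑ j, M i j * y j) = ∑ i, ∑ j, M i j * x i * y j := by
            refine Finset.sum_congr rfl fun i _ => ?_
            rw [Finset.mul_sum]
            exact Finset.sum_congr rfl fun j _ => by ring
        _ = ∑ j, ∑ i, M i j * x i * y j := Finset.sum_comm
        _ = ∑ i, (∑ j, M i j * x j) * y i := by
            refine Finset.sum_congr rfl fun i _ => ?_
            rw [Finset.sum_mul]
            exact Finset.sum_congr rfl fun j _ => by rw [hMs j i]
    have e1 : ∑ i, u m i * (∑ j, M i j * (σ k * u k j))
        = σ k ^ 2 * (∑ i, u m i * v k i) := by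
      rw [Finset.mul_sum]
      exact Finset.sum_congr rfl fun i _ => by rw [MMv i]; ring
    have e2 : ∑ i, u m i * (∑ j, M i j * (σ k * u k j))
        = σ m * σ k * ∑ i, v m i * u k i := by
      rw [pair (u m) (fun j => σ k * u k j)]
      rw [Finset.mul_sum]
      refine Finset.sum_congr rfl fun i _ => ?_
      rw [Mu2 m i]
      ring
    have e3 : ∑ i, v k i * (∑ j, M i j * (σ m * v m j))
        = σ m ^ 2 * (∑ i, u m i * v k i) := by
      rw [Finset.mul_sum]
      refine Finset.sum_congr rfl fun i _ => ?_
      rw [MMu i]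
      ring
    have e4 : ∑ i, v k i * (∑ j, M i j * (σ m * v m j))
        = σ m * σ k * ∑ i, v m i * u k i := by
      rw [pair (v k) (fun j => σ m * v m j)]
      rw [Finset.mul_sum]
      refine Finset.sum_congr rfl fun i _ => ?_
      rw [Mv k i]
      ring
    have key : σ k ^ 2 * (∑ i, u m i * v k i) = σ m ^ 2 * (∑ i, u m i * v k i) := by
      rw [← e1, e2, ← e4, e3]
    have h5 : (σ k ^ 2 - σ m ^ 2) * (∑ i, u m i * v k i) = 0 := by linarith
    rcases mul_eq_zero.mp h5 with h6 | h6
    · exact absurd (by linarith : σ m ^ 2 = σ k ^ 2) hne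
    · exact h6
  -- index sets
  set T : Finset (Fin n) := Finset.univ.filter (fun k : Fin n => (k : ℕ) < r) with hTdef
  set Tc : Finset (Fin n) := Finset.univ.filter (fun k : Fin n => ¬ (k : ℕ) < r) with hTcdef
  have hmemT : ∀ k : Fin n, k ∈ T ↔ (k : ℕ) < r := by
    intro k; simp [hTdef]
  have hmemTc : ∀ k : Fin n, k ∈ Tc ↔ r ≤ (k : ℕ) := by
    intro k; simp [hTcdef]
  have hσa : ∀ k : Fin n, (k : ℕ) < r → σ ra ≤ σ k := by
    intro k hk
    apply hσA
    rw [Fin.le_def]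
    show (k : ℕ) ≤ r - 1
    omega
  have hσb : ∀ k : Fin n, r ≤ (k : ℕ) → σ k ≤ σ rb := by
    intro k hk
    apply hσA
    rw [Fin.le_def]
    exact hk
  have hσ'b : ∀ l : Fin n, r ≤ (l : ℕ) → σ' l ≤ σ rb + Δ := by
    intro l hl
    exact le_trans (hσ'A (by rw [Fin.le_def]; exact hl)) hWeyl
  have horth1 : ∀ m k : Fin n, (m : ℕ) < r → r ≤ (k : ℕ) → ∑ i, u m i * v k i = 0 := by
    intro m k hm hk
    apply orth
    have h1 : σ k < σ m := lt_of_le_of_lt (hσb k hk) (lt_of_lt_of_le (by linarith [hσa m hm, hgap, hΔ0] : σ rb < σ ra) (hσa m hm))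
    exact (pow_lt_pow_left₀ h1 (hσ0 k) (by norm_num)).ne'
  have horth2 : ∀ m k : Fin n, r ≤ (m : ℕ) → (k : ℕ) < r → ∑ i, u m i * v k i = 0 := by
    intro m k hm hk
    apply orth
    have h1 : σ m < σ k := lt_of_le_of_lt (hσb m hm) (lt_of_lt_of_le (by linarith [hσa k hk, hgap, hΔ0] : σ rb < σ ra) (hσa k hk))
    exact (pow_lt_pow_left₀ h1 (hσ0 m) (by norm_num)).ne
  -- P is also the projector onto the top right singular vectors (v's)
  have hPT : ∀ i j, P i j = ∑ k ∈ T, u k i * u k j := by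
    intro i j
    rw [hPu i j, hTdef]
    exact (Finset.sum_filter _ _).symm
  have hP'T : ∀ i j, P' i j = ∑ k ∈ T, u' k i * u' k j := by
    intro i j
    rw [hP'u i j, hTdef]
    exact (Finset.sum_filter _ _).symm
  have hexp_all : ∀ (y : Fin n → ℝ) (i : Fin n),
      ∑ m, (∑ jj, y jj * u m jj) * u m i = y i := by
    intro y i
    calc ∑ m, (∑ jj, y jj * u m jj) * u m i
        = ∑ m, ∑ jj, y jj * (u m jj * u m i) := by
          refine Finset.sum_congr rfl fun m _ => ?_
          rw [Finset.sum_mul]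
          exact Finset.sum_congr rfl fun jj _ => by ring
      _ = ∑ jj, y jj * ∑ m, u m jj * u m i := by
          rw [Finset.sum_comm]
          exact Finset.sum_congr rfl fun jj _ => (Finset.mul_sum _ _ _).symm
      _ = y i := by
          simp_rw [ucomp]
          simp
  have hexp : ∀ k ∈ T, ∀ i, ∑ m ∈ T, (∑ jj, v k jj * u m jj) * u m i = v k i := by
    intro k hk i
    have hsplit := Finset.sum_filter_add_sum_filter_not Finset.univ
      (fun m : Fin n => (m : ℕ) < r) (fun m => (∑ jj, v k jj * u m jj) * u m i)
    have hzero : ∑ m ∈ Tc, (∑ jj, v k jj * u m jj) * u m i = 0 := by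
      refine Finset.sum_eq_zero fun m hm => ?_
      have h0 : ∑ jj, v k jj * u m jj = 0 := by
        have := horth2 m k ((hmemTc m).mp hm) ((hmemT k).mp hk)
        rw [← this]
        exact Finset.sum_congr rfl fun jj _ => by ring
      rw [h0, zero_mul]
    have := hexp_all (v k) i
    rw [← hsplit] at this
    rw [hTdef]
    rw [hTcdef] at hzero
    linarith [this, hzero]
  have hGram : ∀ m ∈ T, ∀ m' ∈ T,
      ∑ k ∈ T, (∑ jj, v k jj * u m jj) * (∑ jj, v k jj * u m' jj)
        = if m = m' then (1:ℝ) else 0 := by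
    intro m hm m' hm'
    have hall := parseval2 v vcomp (u m) (u m')
    have hsplit := Finset.sum_filter_add_sum_filter_not Finset.univ
      (fun k : Fin n => (k : ℕ) < r)
      (fun k => (∑ jj, u m jj * v k jj) * (∑ jj, u m' jj * v k jj))
    have hzero : ∑ k ∈ Tc, (∑ jj, u m jj * v k jj) * (∑ jj, u m' jj * v k jj) = 0 := by
      refine Finset.sum_eq_zero fun k hk => ?_
      rw [horth1 m k ((hmemT m).mp hm) ((hmemTc k).mp hk), zero_mul]
    have heq : ∑ k ∈ T, (∑ jj, v k jj * u m jj) * (∑ jj, v k jj * u m' jj)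
        = ∑ k ∈ T, (∑ jj, u m jj * v k jj) * (∑ jj, u m' jj * v k jj) := by
      refine Finset.sum_congr rfl fun k _ => ?_
      congr 1 <;> exact Finset.sum_congr rfl fun jj _ => by ring
    rw [heq, ← huu m m']
    rw [hTcdef] at hzero
    rw [hTdef]
    linarith [hsplit, hzero, hall]
  have hPvP : ∀ i j, ∑ k ∈ T, v k i * v k j = P i j := by
    intro i j
    calc ∑ k ∈ T, v k i * v k j
        = ∑ k ∈ T, (∑ m ∈ T, (∑ jj, v k jj * u m jj) * u m i)
            * (∑ m' ∈ T, (∑ jj, v k jj * u m' jj) * u m' j) := by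
          refine Finset.sum_congr rfl fun k hk => ?_
          rw [hexp k hk i, hexp k hk j]
      _ = ∑ k ∈ T, ∑ m ∈ T, ∑ m' ∈ T,
            ((∑ jj, v k jj * u m jj) * (∑ jj, v k jj * u m' jj)) * (u m i * u m' j) := by
          refine Finset.sum_congr rfl fun k _ => ?_
          rw [Finset.sum_mul_sum]
          exact Finset.sum_congr rfl fun m _ => Finset.sum_congr rfl fun m' _ => by ring
      _ = ∑ m ∈ T, ∑ k ∈ T, ∑ m' ∈ T,
            ((∑ jj, v k jj * u m jj) * (∑ jj, v k jj * u m' jj)) * (u m i * u m' j) :=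
          Finset.sum_comm
      _ = ∑ m ∈ T, ∑ m' ∈ T, ∑ k ∈ T,
            ((∑ jj, v k jj * u m jj) * (∑ jj, v k jj * u m' jj)) * (u m i * u m' j) :=
          Finset.sum_congr rfl fun m _ => Finset.sum_comm
      _ = ∑ m ∈ T, ∑ m' ∈ T, (if m = m' then (1:ℝ) else 0) * (u m i * u m' j) := by
          refine Finset.sum_congr rfl fun m hm => Finset.sum_congr rfl fun m' hm' => ?_
          rw [← Finset.sum_mul, hGram m hm m' hm']
      _ = ∑ m ∈ T, u m i * u m j := by
          refine Finset.sum_congr rfl fun m hm => ?_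
          calc ∑ m' ∈ T, (if m = m' then (1:ℝ) else 0) * (u m i * u m' j)
              = ∑ m' ∈ T, (if m = m' then u m i * u m' j else 0) :=
                Finset.sum_congr rfl fun m' _ => by split <;> simp
            _ = u m i * u m j := by
                rw [Finset.sum_ite_eq T m (fun m' => u m i * u m' j)]
                simp [hm]
      _ = P i j := (hPT i j).symm
  -- bound on entries of P
  have hs : ∀ i j, |P i j| ≤ s := by
    intro i j
    have h1 : |P i j| ≤ ⨆ j', |P i j'| :=
      le_ciSup (f := fun j' => |P i j'|) (Set.Finite.bddAbove (Set.finite_range _)) j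
    have h2 : (⨆ j', |P i j'|) ≤ s := by
      rw [hsdef]
      exact le_ciSup (f := fun i => ⨆ j', |P i j'|)
        (Set.Finite.bddAbove (Set.finite_range _)) i
    exact le_trans h1 h2
  have hi0 : Fin n := ⟨0, by omega⟩
  have hs0 : 0 ≤ s := le_trans (abs_nonneg _) (hs hi0 hi0)
  -- Hölder bound
  have hPF : ∑ i, ∑ i', P i i' * F i i' ≤ s * Δ ^ 2 := by
    calc ∑ i, ∑ i', P i i' * F i i' ≤ ∑ i, ∑ i', s * |F i i'| := by
          refine Finset.sum_le_sum fun i _ => Finset.sum_le_sum fun i' _ => ?_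
          calc P i i' * F i i' ≤ |P i i' * F i i'| := le_abs_self _
            _ = |P i i'| * |F i i'| := abs_mul _ _
            _ ≤ s * |F i i'| := mul_le_mul_of_nonneg_right (hs i i') (abs_nonneg _)
      _ = s * ∑ i, ∑ i', |F i i'| := by
          rw [Finset.mul_sum]
          exact Finset.sum_congr rfl fun i _ => (Finset.mul_sum _ _ _).symm
      _ ≤ s * Δ ^ 2 := mul_le_mul_of_nonneg_left hFsum hs0
  have HA : ∑ k ∈ T, ∑ j, (∑ i, u k i * E i j) ^ 2 ≤ s * Δ ^ 2 := by
    rw [quad_swap T u E]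
    calc ∑ i, ∑ i', (∑ k ∈ T, u k i * u k i') * (∑ j, E i j * E i' j)
        = ∑ i, ∑ i', P i i' * F i i' := by
          refine Finset.sum_congr rfl fun i _ => Finset.sum_congr rfl fun i' _ => ?_
          rw [← hPT i i']
      _ ≤ s * Δ ^ 2 := hPF
  have HB : ∑ k ∈ T, ∑ i, (∑ j, E i j * v k j) ^ 2 ≤ s * Δ ^ 2 := by
    have hq := quad_swap T v (fun t i => E i t)
    calc ∑ k ∈ T, ∑ i, (∑ j, E i j * v k j) ^ 2
        = ∑ k ∈ T, ∑ i, (∑ j, v k j * E i j) ^ 2 := by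
          refine Finset.sum_congr rfl fun k _ => Finset.sum_congr rfl fun i _ => ?_
          congr 1
          exact Finset.sum_congr rfl fun j _ => by ring
      _ = ∑ i, ∑ i', (∑ k ∈ T, v k i * v k i') * (∑ j, E j i * E j i') := hq
      _ = ∑ i, ∑ i', P i i' * F i i' := by
          refine Finset.sum_congr rfl fun i _ => Finset.sum_congr rfl fun i' _ => ?_
          rw [hPvP i i']
          congr 1
          refine Finset.sum_congr rfl fun j _ => ?_
          rw [← hEs i j, ← hEs i' j]
      _ ≤ s * Δ ^ 2 := hPF
  -- the inner products p, q and the perturbation quantities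
  set p : Fin n → Fin n → ℝ := fun k l => ∑ i, u k i * u' l i with hpdef
  set q : Fin n → Fin n → ℝ := fun k l => ∑ i, v k i * v' l i with hqdef
  set al : Fin n → Fin n → ℝ := fun k l => σ' l * p k l - σ k * q k l with haldef
  set be : Fin n → Fin n → ℝ := fun k l => σ' l * q k l - σ k * p k l with hbedef
  have hal : ∀ k l, ∑ j, (∑ i, u k i * E i j) * v' l j = al k l := by
    intro k l
    have hsp : ∀ j, (∑ i, u k i * E i j)
        = (∑ i, u k i * M' i j) - (∑ i, u k i * M i j) := by
      intro j
      rw [← Finset.sum_sub_distrib]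
      refine Finset.sum_congr rfl fun i _ => ?_
      simp only [hEdef]
      ring
    have t1 : ∑ j, (∑ i, u k i * M' i j) * v' l j = σ' l * p k l := by
      rw [swap_mul M' (u k) (v' l)]
      rw [hpdef]
      simp only
      rw [Finset.mul_sum]
      refine Finset.sum_congr rfl fun i _ => ?_
      rw [M'v l i]
      ring
    have t2 : ∑ j, (∑ i, u k i * M i j) * v' l j = σ k * q k l := by
      have e : ∀ j, ∑ i, u k i * M i j = σ k * v k j := by
        intro j
        rw [← Mu k j]
        exact Finset.sum_congr rfl fun i _ => by ring
      simp_rw [e]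
      rw [hqdef]
      simp only
      rw [Finset.mul_sum]
      exact Finset.sum_congr rfl fun j _ => by ring
    calc ∑ j, (∑ i, u k i * E i j) * v' l j
        = (∑ j, (∑ i, u k i * M' i j) * v' l j)
          - (∑ j, (∑ i, u k i * M i j) * v' l j) := by
          rw [← Finset.sum_sub_distrib]
          refine Finset.sum_congr rfl fun j _ => ?_
          rw [hsp j]
          ring
      _ = al k l := by rw [t1, t2, haldef]
  have hbe : ∀ k l, ∑ i, (∑ j, E i j * v k j) * u' l i = be k l := by
    intro k l
    have hsp : ∀ i, (∑ j, E i j * v k j)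
        = (∑ j, M' i j * v k j) - (∑ j, M i j * v k j) := by
      intro i
      rw [← Finset.sum_sub_distrib]
      refine Finset.sum_congr rfl fun j _ => ?_
      simp only [hEdef]
      ring
    have t2 : ∑ i, (∑ j, M i j * v k j) * u' l i = σ k * p k l := by
      simp_rw [Mv k]
      rw [hpdef]
      simp only
      rw [Finset.mul_sum]
      exact Finset.sum_congr rfl fun i _ => by ring
    have t1 : ∑ i, (∑ j, M' i j * v k j) * u' l i = σ' l * q k l := by
      calc ∑ i, (∑ j, M' i j * v k j) * u' l i
          = ∑ j, (∑ i, v k i * (fun a b => M' b a) i j) * u' l j := by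
            refine Finset.sum_congr rfl fun i _ => ?_
            congr 1
            exact Finset.sum_congr rfl fun j _ => by ring
        _ = ∑ i, v k i * (∑ j, (fun a b => M' b a) i j * u' l j) :=
            swap_mul (fun a b => M' b a) (v k) (u' l)
        _ = σ' l * q k l := by
            rw [hqdef]
            simp only
            rw [Finset.mul_sum]
            refine Finset.sum_congr rfl fun i _ => ?_
            rw [M'u l i]
            ring
    calc ∑ i, (∑ j, E i j * v k j) * u' l i
        = (∑ i, (∑ j, M' i j * v k j) * u' l i)
          - (∑ i, (∑ j, M i j * v k j) * u' l i) := by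
          rw [← Finset.sum_sub_distrib]
          refine Finset.sum_congr rfl fun i _ => ?_
          rw [hsp i]
          ring
      _ = be k l := by rw [t1, t2, hbedef]
  have halsum : ∀ k, ∑ l, al k l ^ 2 = ∑ j, (∑ i, u k i * E i j) ^ 2 := by
    intro k
    have h1 := parseval2 v' v'comp (fun j => ∑ i, u k i * E i j)
      (fun j => ∑ i, u k i * E i j)
    calc ∑ l, al k l ^ 2
        = ∑ l, (∑ j, (∑ i, u k i * E i j) * v' l j)
            * (∑ j, (∑ i, u k i * E i j) * v' l j) := by
          refine Finset.sum_congr rfl fun l _ => ?_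
          rw [hal k l, sq]
      _ = ∑ j, (∑ i, u k i * E i j) * (∑ i, u k i * E i j) := h1
      _ = ∑ j, (∑ i, u k i * E i j) ^ 2 := by
          exact Finset.sum_congr rfl fun j _ => (sq _).symm
  have hbesum : ∀ k, ∑ l, be k l ^ 2 = ∑ i, (∑ j, E i j * v k j) ^ 2 := by
    intro k
    have h1 := parseval2 u' u'comp (fun i => ∑ j, E i j * v k j)
      (fun i => ∑ j, E i j * v k j)
    calc ∑ l, be k l ^ 2
        = ∑ l, (∑ i, (∑ j, E i j * v k j) * u' l i)
            * (∑ i, (∑ j, E i j * v k j) * u' l i) := by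
          refine Finset.sum_congr rfl fun l _ => ?_
          rw [hbe k l, sq]
      _ = ∑ i, (∑ j, E i j * v k j) * (∑ j, E i j * v k j) := h1
      _ = ∑ i, (∑ j, E i j * v k j) ^ 2 := by
          exact Finset.sum_congr rfl fun i _ => (sq _).symm
  -- the central per-pair bound
  have hδpos : 0 < σ ra - σ rb - Δ := by linarith
  have hpbound : ∀ k ∈ T, ∀ l ∈ Tc,
      (σ ra - σ rb - Δ) ^ 2 * p k l ^ 2 ≤ al k l ^ 2 + be k l ^ 2 := by
    intro k hk l hl
    have hka : σ ra ≤ σ k := hσa k ((hmemT k).mp hk)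
    have hlb : σ' l ≤ σ rb + Δ := hσ'b l ((hmemTc l).mp hl)
    have hl0 : 0 ≤ σ' l := hσ'0 l
    have hb0 : 0 ≤ σ rb := hσ0 rb
    have d1 : σ ra - σ rb - Δ ≤ σ k - σ' l := by linarith
    have d2 : σ ra - σ rb - Δ ≤ σ k + σ' l := by linarith
    have hid1 : al k l + be k l = (σ' l - σ k) * (p k l + q k l) := by
      rw [haldef, hbedef]; ring
    have hid2 : al k l - be k l = (σ' l + σ k) * (p k l - q k l) := by
      rw [haldef, hbedef]; ring
    have e1 : (al k l + be k l) ^ 2 = (σ k - σ' l) ^ 2 * (p k l + q k l) ^ 2 := by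
      rw [hid1]; ring
    have e2 : (al k l - be k l) ^ 2 = (σ k + σ' l) ^ 2 * (p k l - q k l) ^ 2 := by
      rw [hid2]; ring
    have i1 : (σ ra - σ rb - Δ) ^ 2 * (p k l + q k l) ^ 2 ≤ (al k l + be k l) ^ 2 := by
      rw [e1]
      exact mul_le_mul_of_nonneg_right (pow_le_pow_left₀ hδpos.le d1 2) (sq_nonneg _)
    have i2 : (σ ra - σ rb - Δ) ^ 2 * (p k l - q k l) ^ 2 ≤ (al k l - be k l) ^ 2 := by
      rw [e2]
      exact mul_le_mul_of_nonneg_right (pow_le_pow_left₀ hδpos.le d2 2) (sq_nonneg _)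
    have j2 : (al k l + be k l) ^ 2 + (al k l - be k l) ^ 2
        = 2 * al k l ^ 2 + 2 * be k l ^ 2 := by ring
    have j3 : 0 ≤ (σ ra - σ rb - Δ) ^ 2 * q k l ^ 2 :=
      mul_nonneg (sq_nonneg _) (sq_nonneg _)
    have j4 : (σ ra - σ rb - Δ) ^ 2 * (p k l + q k l) ^ 2
          + (σ ra - σ rb - Δ) ^ 2 * (p k l - q k l) ^ 2
        = 2 * ((σ ra - σ rb - Δ) ^ 2 * p k l ^ 2)
          + 2 * ((σ ra - σ rb - Δ) ^ 2 * q k l ^ 2) := by ring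
    linarith [i1, i2, j2, j3, j4]
  -- Frobenius identity
  have hParse1 : ∀ k, ∑ l, p k l ^ 2 = 1 := by
    intro k
    have h1 := parseval2 u' u'comp (u k) (u k)
    calc ∑ l, p k l ^ 2
        = ∑ l, (∑ j, u k j * u' l j) * (∑ j, u k j * u' l j) := by
          refine Finset.sum_congr rfl fun l _ => ?_
          rw [hpdef]
          simp only
          rw [sq]
      _ = ∑ j, u k j * u k j := h1
      _ = 1 := by
          have := huu k k
          simpa using this
  have hPP : ∑ i, ∑ j, P i j * P i j = ∑ k ∈ T, (1:ℝ) := by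
    calc ∑ i, ∑ j, P i j * P i j
        = ∑ i, ∑ j, (∑ k ∈ T, u k i * u k j) * (∑ l ∈ T, u l i * u l j) := by
          refine Finset.sum_congr rfl fun i _ => Finset.sum_congr rfl fun j _ => ?_
          rw [hPT i j]
      _ = ∑ k ∈ T, ∑ l ∈ T, (∑ i, u k i * u l i) ^ 2 := proj_inner T T u u
      _ = ∑ k ∈ T, (1:ℝ) := by
          refine Finset.sum_congr rfl fun k hk => ?_
          calc ∑ l ∈ T, (∑ i, u k i * u l i) ^ 2
              = ∑ l ∈ T, (if k = l then (1:ℝ) else 0) := by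
                refine Finset.sum_congr rfl fun l _ => ?_
                rw [huu k l]
                split <;> norm_num
            _ = 1 := by rw [Finset.sum_ite_eq T k (fun _ => (1:ℝ))]; simp [hk]
  have hP'P' : ∑ i, ∑ j, P' i j * P' i j = ∑ k ∈ T, (1:ℝ) := by
    calc ∑ i, ∑ j, P' i j * P' i j
        = ∑ i, ∑ j, (∑ k ∈ T, u' k i * u' k j) * (∑ l ∈ T, u' l i * u' l j) := by
          refine Finset.sum_congr rfl fun i _ => Finset.sum_congr rfl fun j _ => ?_
          rw [hP'T i j]
      _ = ∑ k ∈ T, ∑ l ∈ T, (∑ i, u' k i * u' l i) ^ 2 := proj_inner T T u' u'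
      _ = ∑ k ∈ T, (1:ℝ) := by
          refine Finset.sum_congr rfl fun k hk => ?_
          calc ∑ l ∈ T, (∑ i, u' k i * u' l i) ^ 2
              = ∑ l ∈ T, (if k = l then (1:ℝ) else 0) := by
                refine Finset.sum_congr rfl fun l _ => ?_
                rw [huu' k l]
                split <;> norm_num
            _ = 1 := by rw [Finset.sum_ite_eq T k (fun _ => (1:ℝ))]; simp [hk]
  have hPQ : ∑ i, ∑ j, P i j * P' i j = ∑ k ∈ T, ∑ l ∈ T, p k l ^ 2 := by
    calc ∑ i, ∑ j, P i j * P' i j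
        = ∑ i, ∑ j, (∑ k ∈ T, u k i * u k j) * (∑ l ∈ T, u' l i * u' l j) := by
          refine Finset.sum_congr rfl fun i _ => Finset.sum_congr rfl fun j _ => ?_
          rw [hPT i j, hP'T i j]
      _ = ∑ k ∈ T, ∑ l ∈ T, (∑ i, u k i * u' l i) ^ 2 := proj_inner T T u u'
      _ = ∑ k ∈ T, ∑ l ∈ T, p k l ^ 2 := rfl
  have hFrob : ∑ i, ∑ j, (P i j - P' i j) ^ 2 = 2 * ∑ k ∈ T, ∑ l ∈ Tc, p k l ^ 2 := by
    have hexpand : ∑ i, ∑ j, (P i j - P' i j) ^ 2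
        = (∑ i, ∑ j, P i j * P i j) - 2 * (∑ i, ∑ j, P i j * P' i j)
          + (∑ i, ∑ j, P' i j * P' i j) := by
      rw [Finset.mul_sum, ← Finset.sum_sub_distrib, ← Finset.sum_add_distrib]
      refine Finset.sum_congr rfl fun i _ => ?_
      rw [Finset.mul_sum, ← Finset.sum_sub_distrib, ← Finset.sum_add_distrib]
      exact Finset.sum_congr rfl fun j _ => by ring
    have hcompl : ∀ k, ∑ l ∈ T, p k l ^ 2 + ∑ l ∈ Tc, p k l ^ 2 = 1 := by
      intro k
      have := Finset.sum_filter_add_sum_filter_not Finset.univ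
        (fun l : Fin n => (l : ℕ) < r) (fun l => p k l ^ 2)
      rw [hTdef, hTcdef]
      rw [this]
      exact hParse1 k
    rw [hexpand, hPP, hP'P', hPQ]
    have h2 : ∑ k ∈ T, ∑ l ∈ T, p k l ^ 2
        = (∑ k ∈ T, (1:ℝ)) - ∑ k ∈ T, ∑ l ∈ Tc, p k l ^ 2 := by
      rw [← Finset.sum_sub_distrib]
      exact Finset.sum_congr rfl fun k _ => by linarith [hcompl k]
    rw [h2]
    ring
  -- put everything together
  have hG0 : 0 ≤ ∑ k ∈ T, ∑ l ∈ Tc, p k l ^ 2 :=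
    Finset.sum_nonneg fun k _ => Finset.sum_nonneg fun l _ => sq_nonneg _
  have hGbound : (σ ra - σ rb - Δ) ^ 2 * (∑ k ∈ T, ∑ l ∈ Tc, p k l ^ 2)
      ≤ 2 * (s * Δ ^ 2) := by
    calc (σ ra - σ rb - Δ) ^ 2 * (∑ k ∈ T, ∑ l ∈ Tc, p k l ^ 2)
        = ∑ k ∈ T, ∑ l ∈ Tc, (σ ra - σ rb - Δ) ^ 2 * p k l ^ 2 := by
          rw [Finset.mul_sum]
          exact Finset.sum_congr rfl fun k _ => Finset.mul_sum _ _ _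
      _ ≤ ∑ k ∈ T, ∑ l ∈ Tc, (al k l ^ 2 + be k l ^ 2) := by
          exact Finset.sum_le_sum fun k hk => Finset.sum_le_sum fun l hl =>
            hpbound k hk l hl
      _ ≤ ∑ k ∈ T, ∑ l, (al k l ^ 2 + be k l ^ 2) := by
          refine Finset.sum_le_sum fun k _ => ?_
          refine Finset.sum_le_sum_of_subset_of_nonneg (Finset.subset_univ Tc)
            fun l _ _ => by positivity
      _ = ∑ k ∈ T, ((∑ j, (∑ i, u k i * E i j) ^ 2) + ∑ i, (∑ j, E i j * v k j) ^ 2) := by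
          refine Finset.sum_congr rfl fun k _ => ?_
          rw [Finset.sum_add_distrib, halsum k, hbesum k]
      _ = (∑ k ∈ T, ∑ j, (∑ i, u k i * E i j) ^ 2)
          + ∑ k ∈ T, ∑ i, (∑ j, E i j * v k j) ^ 2 := Finset.sum_add_distrib
      _ ≤ s * Δ ^ 2 + s * Δ ^ 2 := add_le_add HA HB
      _ = 2 * (s * Δ ^ 2) := by ring
  have hmain : ∑ i, ∑ j, (P i j - P' i j) ^ 2
      ≤ (4 * Δ * Real.sqrt s / (σ ra - σ rb)) ^ 2 := by
    have hRHS : (4 * Δ * Real.sqrt s / (σ ra - σ rb)) ^ 2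
        = 16 * Δ ^ 2 * s / (σ ra - σ rb) ^ 2 := by
      rw [div_pow, mul_pow, mul_pow, Real.sq_sqrt hs0]
      norm_num
    rw [hFrob, hRHS, le_div_iff₀ (by positivity)]
    have h1 : (σ ra - σ rb) ^ 2 ≤ 4 * (σ ra - σ rb - Δ) ^ 2 := by
      have hh : σ ra - σ rb ≤ 2 * (σ ra - σ rb - Δ) := by linarith
      calc (σ ra - σ rb) ^ 2 ≤ (2 * (σ ra - σ rb - Δ)) ^ 2 :=
            pow_le_pow_left₀ hgpos.le hh 2
        _ = 4 * (σ ra - σ rb - Δ) ^ 2 := by ring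
    have h2 : (σ ra - σ rb) ^ 2 * (∑ k ∈ T, ∑ l ∈ Tc, p k l ^ 2)
        ≤ 4 * ((σ ra - σ rb - Δ) ^ 2 * (∑ k ∈ T, ∑ l ∈ Tc, p k l ^ 2)) := by
      have h3 := mul_le_mul_of_nonneg_right h1 hG0
      linarith [h3]
    linarith [hGbound, h2]
  have hfinal : Real.sqrt (∑ i, ∑ j, (P i j - P' i j) ^ 2)
      ≤ 4 * Δ * Real.sqrt s / (σ ra - σ rb) := by
    have hnn : 0 ≤ 4 * Δ * Real.sqrt s / (σ ra - σ rb) := by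
      apply div_nonneg _ hgpos.le
      positivity
    have h2 := Real.sqrt_le_sqrt hmain
    rwa [Real.sqrt_sq hnn] at h2
  have hcast : (r : ℝ) * (((n : ℝ) / (r : ℝ)) * s) / (n : ℝ) = s := by
    have hr : (r : ℝ) ≠ 0 := Nat.cast_ne_zero.mpr hr0.ne'
    have hn : (n : ℝ) ≠ 0 := Nat.cast_ne_zero.mpr (by omega : n ≠ 0)
    field_simp
  rw [hcast]
  exact hfinal
end

section
/- Let G and G' be edge-adjacent weighted n-vertex graphs (differing in a single edge of weight 1), with minimum degrees at least d_min ≥ 1. Then the entrywise ℓ1 distance between their normalized adjacency matrices satisfies ||D^{-1/2} A D^{-1/2} − D'^{-1/2} A' D'^{-1/2}||_1 ≤ 8/min{d_min(G), d_min(G')}. -/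
open Matrix BigOperators

private lemma aux1 {u v w : ℝ} (hw : 0 < w) (hwu : w ≤ u) (huv : u ≤ v) :
    1/u - 1/v ≤ (v^2 - u^2) / (2 * u^2 * w) := by
  have hu : 0 < u := hw.trans_le hwu
  have hv : 0 < v := hu.trans_le huv
  rw [div_sub_div _ _ hu.ne' hv.ne', div_le_div_iff₀ (by positivity) (by positivity)]
  nlinarith [mul_pos hu hv, mul_nonneg (mul_nonneg (sub_nonneg.2 huv) (sub_nonneg.2 huv)) (mul_pos hu hv).le,
    mul_nonneg (sub_nonneg.2 huv) (mul_nonneg (mul_nonneg hu.le hu.le) (sub_nonneg.2 hwu))]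

private lemma key (m : ℕ) (A A' : Matrix (Fin (m + 1)) (Fin (m + 1)) ℝ)
    (hA : A.IsSymm)
    (hApos : ∀ i j, 0 ≤ A i j) (a b : Fin (m + 1)) (hab : a ≠ b)
    (hE : ∀ i j, A' i j - A i j =
        if (i = a ∧ j = b) ∨ (i = b ∧ j = a) then (1:ℝ) else 0)
    (hd : ∀ i, 1 ≤ ∑ j, A i j) (hd' : ∀ i, 1 ≤ ∑ j, A' i j) :
    ∑ i, ∑ j,
        |A i j / (Real.sqrt (∑ l, A i l) * Real.sqrt (∑ l, A j l)) -
          A' i j / (Real.sqrt (∑ l, A' i l) * Real.sqrt (∑ l, A' j l))| ≤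
      8 / min (⨅ i, ∑ j, A i j) (⨅ i, ∑ j, A' i j) := by
  suffices h : ∀ (d d' : Fin (m + 1) → ℝ), (∀ i, d i = ∑ j, A i j) →
      (∀ i, d' i = ∑ j, A' i j) →
      ∑ i, ∑ j,
        |A i j / (Real.sqrt (d i) * Real.sqrt (d j)) -
          A' i j / (Real.sqrt (d' i) * Real.sqrt (d' j))| ≤
      8 / min (⨅ i, d i) (⨅ i, d' i) by
    exact h _ _ (fun _ => rfl) (fun _ => rfl)
  intro d d' hdA hd'A
  have hd1 : ∀ i, 1 ≤ d i := fun i => (hdA i) ▸ hd i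
  have hd'1 : ∀ i, 1 ≤ d' i := fun i => (hd'A i) ▸ hd' i
  set δ := min (⨅ i, d i) (⨅ i, d' i) with hδdef
  have hδ1 : 1 ≤ δ := le_min (le_ciInf hd1) (le_ciInf hd'1)
  have hδ0 : 0 < δ := zero_lt_one.trans_le hδ1
  have hδd : ∀ i, δ ≤ d i := fun i =>
    (min_le_left _ _).trans (ciInf_le (Set.finite_range d).bddBelow i)
  have hδd' : ∀ i, δ ≤ d' i := fun i =>
    (min_le_right _ _).trans (ciInf_le (Set.finite_range d').bddBelow i)
  have hd0 : ∀ i, 0 < d i := fun i => hδ0.trans_le (hδd i)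
  have hd'0 : ∀ i, 0 < d' i := fun i => hδ0.trans_le (hδd' i)
  have hs0 : ∀ i, 0 < Real.sqrt (d i) := fun i => Real.sqrt_pos.2 (hd0 i)
  have hs'0 : ∀ i, 0 < Real.sqrt (d' i) := fun i => Real.sqrt_pos.2 (hd'0 i)
  have hsδ : 0 < Real.sqrt δ := Real.sqrt_pos.2 hδ0
  have he : ∀ i j, (0:ℝ) ≤ A' i j - A i j := by
    intro i j; rw [hE i j]; split_ifs <;> norm_num
  have hAe : ∀ i j, A' i j = A i j +
      (if (i = a ∧ j = b) ∨ (i = b ∧ j = a) then (1:ℝ) else 0) := by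
    intro i j; have := hE i j; linarith
  have hcd : ∀ i, d' i = d i + (if i = a ∨ i = b then (1:ℝ) else 0) := by
    intro i
    rw [hd'A i, hdA i]
    simp_rw [hAe]
    rw [Finset.sum_add_distrib]
    congr 1
    by_cases hia : i = a
    · subst hia; simp [hab, Finset.sum_ite_eq']
    · by_cases hib : i = b
      · subst hib; simp [hab.symm, hia, Finset.sum_ite_eq']
      · simp [hia, hib]
  have hdd' : ∀ i, d i ≤ d' i := by
    intro i; rw [hcd i]; split_ifs <;> linarith
  have hsum_c : ∑ i, (if i = a ∨ i = b then (1:ℝ) else 0) = 2 := by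
    have split : ∀ i : Fin (m + 1), (if i = a ∨ i = b then (1:ℝ) else 0) =
        (if i = a then (1:ℝ) else 0) + (if i = b then (1:ℝ) else 0) := by
      intro i
      by_cases h1 : i = a <;> by_cases h2 : i = b <;> simp_all
    simp_rw [split]
    rw [Finset.sum_add_distrib]
    simp [Finset.sum_ite_eq']
    norm_num
  have hf : ∀ i, 0 ≤ 1/Real.sqrt (d i) - 1/Real.sqrt (d' i) := fun i =>
    sub_nonneg.2 (one_div_le_one_div_of_le (hs0 i) (Real.sqrt_le_sqrt (hdd' i)))
  have hterm : ∀ i j,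
      |A i j / (Real.sqrt (d i) * Real.sqrt (d j)) -
        A' i j / (Real.sqrt (d' i) * Real.sqrt (d' j))| ≤
      (A' i j - A i j) / (Real.sqrt (d' i) * Real.sqrt (d' j))
        + A i j * ((1/Real.sqrt (d i) - 1/Real.sqrt (d' i)) * (1/Real.sqrt (d j)))
        + A i j * ((1/Real.sqrt (d j) - 1/Real.sqrt (d' j)) * (1/Real.sqrt (d' i))) := by
    intro i j
    have hident : A i j / (Real.sqrt (d i) * Real.sqrt (d j)) -
        A' i j / (Real.sqrt (d' i) * Real.sqrt (d' j)) =
        (-((A' i j - A i j) / (Real.sqrt (d' i) * Real.sqrt (d' j))))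
        + A i j * ((1/Real.sqrt (d i) - 1/Real.sqrt (d' i)) * (1/Real.sqrt (d j)))
        + A i j * ((1/Real.sqrt (d j) - 1/Real.sqrt (d' j)) * (1/Real.sqrt (d' i))) := by
      field_simp
      ring
    rw [hident]
    refine (abs_add_three _ _ _).trans ?_
    rw [abs_neg]
    have e1 : |(A' i j - A i j) / (Real.sqrt (d' i) * Real.sqrt (d' j))| =
        (A' i j - A i j) / (Real.sqrt (d' i) * Real.sqrt (d' j)) :=
      abs_of_nonneg (div_nonneg (he i j) (by positivity))
    have e2 : |A i j * ((1/Real.sqrt (d i) - 1/Real.sqrt (d' i)) * (1/Real.sqrt (d j)))| =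
        A i j * ((1/Real.sqrt (d i) - 1/Real.sqrt (d' i)) * (1/Real.sqrt (d j))) :=
      abs_of_nonneg (mul_nonneg (hApos i j) (mul_nonneg (hf i) (by positivity)))
    have e3 : |A i j * ((1/Real.sqrt (d j) - 1/Real.sqrt (d' j)) * (1/Real.sqrt (d' i)))| =
        A i j * ((1/Real.sqrt (d j) - 1/Real.sqrt (d' j)) * (1/Real.sqrt (d' i))) :=
      abs_of_nonneg (mul_nonneg (hApos i j) (mul_nonneg (hf j) (by positivity)))
    rw [e1, e2, e3]
  -- total mass of the edge difference is 2
  have hmass : ∑ i, ∑ j, (A' i j - A i j) = 2 := by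
    have : ∀ i, ∑ j, (A' i j - A i j) = d' i - d i := by
      intro i; rw [Finset.sum_sub_distrib, ← hdA i, ← hd'A i]
    simp_rw [this, hcd]
    simp_rw [add_sub_cancel_left]
    exact hsum_c
  have hδδ : Real.sqrt δ * Real.sqrt δ = δ := Real.mul_self_sqrt hδ0.le
  -- S1
  have hS1 : ∑ i, ∑ j, (A' i j - A i j) / (Real.sqrt (d' i) * Real.sqrt (d' j)) ≤ 2 / δ := by
    have step : ∀ i j, (A' i j - A i j) / (Real.sqrt (d' i) * Real.sqrt (d' j)) ≤
        (A' i j - A i j) / δ := by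
      intro i j
      apply div_le_div_of_nonneg_left (he i j) hδ0
      calc δ = Real.sqrt δ * Real.sqrt δ := hδδ.symm
        _ ≤ Real.sqrt (d' i) * Real.sqrt (d' j) :=
          mul_le_mul (Real.sqrt_le_sqrt (hδd' i)) (Real.sqrt_le_sqrt (hδd' j)) hsδ.le (hs'0 i).le
    calc ∑ i, ∑ j, (A' i j - A i j) / (Real.sqrt (d' i) * Real.sqrt (d' j))
        ≤ ∑ i, ∑ j, (A' i j - A i j) / δ :=
          Finset.sum_le_sum fun i _ => Finset.sum_le_sum fun j _ => step i j
      _ = (∑ i, ∑ j, (A' i j - A i j)) / δ := by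
          rw [Finset.sum_div]; exact Finset.sum_congr rfl fun i _ => by rw [Finset.sum_div]
      _ = 2 / δ := by rw [hmass]
  -- per-row bounds for S2/S3
  have hfb : ∀ i, 1/Real.sqrt (d i) - 1/Real.sqrt (d' i) ≤
      (d' i - d i) / (2 * d i * Real.sqrt δ) := by
    intro i
    have := aux1 (u := Real.sqrt (d i)) (v := Real.sqrt (d' i)) (w := Real.sqrt δ)
      hsδ (Real.sqrt_le_sqrt (hδd i)) (Real.sqrt_le_sqrt (hdd' i))
    rwa [Real.sq_sqrt (hd0 i).le, Real.sq_sqrt (hd'0 i).le] at this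
  have hrow : ∀ i, ∑ j, A i j * (1/Real.sqrt (d j)) ≤ d i / Real.sqrt δ := by
    intro i
    calc ∑ j, A i j * (1/Real.sqrt (d j)) ≤ ∑ j, A i j * (1/Real.sqrt δ) :=
        Finset.sum_le_sum fun j _ => mul_le_mul_of_nonneg_left
          (one_div_le_one_div_of_le hsδ (Real.sqrt_le_sqrt (hδd j))) (hApos i j)
      _ = d i / Real.sqrt δ := by rw [← Finset.sum_mul, ← hdA i, mul_one_div]
  have hrow' : ∀ j, ∑ i, A i j * (1/Real.sqrt (d' i)) ≤ d j / Real.sqrt δ := by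
    intro j
    calc ∑ i, A i j * (1/Real.sqrt (d' i)) ≤ ∑ i, A i j * (1/Real.sqrt δ) :=
        Finset.sum_le_sum fun i _ => mul_le_mul_of_nonneg_left
          (one_div_le_one_div_of_le hsδ (Real.sqrt_le_sqrt (hδd' i))) (hApos i j)
      _ = d j / Real.sqrt δ := by
          rw [← Finset.sum_mul, mul_one_div]
          congr 1
          rw [hdA j]
          exact Finset.sum_congr rfl fun i _ => hA.apply j i ▸ rfl
  have hprod : ∀ (c x : ℝ), 0 ≤ c → δ ≤ x → (c / (2 * x * Real.sqrt δ)) * (x / Real.sqrt δ) = c / (2 * δ) := by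
    intro c x hc hx
    have hx0 : x ≠ 0 := (hδ0.trans_le hx).ne'
    field_simp
    ring_nf
    rw [Real.sq_sqrt hδ0.le]
  -- S2
  have hS2 : ∑ i, ∑ j, A i j * ((1/Real.sqrt (d i) - 1/Real.sqrt (d' i)) * (1/Real.sqrt (d j)))
      ≤ 1 / δ := by
    have step : ∀ i, ∑ j, A i j * ((1/Real.sqrt (d i) - 1/Real.sqrt (d' i)) * (1/Real.sqrt (d j)))
        ≤ (if i = a ∨ i = b then (1:ℝ) else 0) / (2 * δ) := by
      intro i
      have hrearr : ∑ j, A i j * ((1/Real.sqrt (d i) - 1/Real.sqrt (d' i)) * (1/Real.sqrt (d j)))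
          = (1/Real.sqrt (d i) - 1/Real.sqrt (d' i)) * ∑ j, A i j * (1/Real.sqrt (d j)) := by
        rw [Finset.mul_sum]
        exact Finset.sum_congr rfl fun j _ => by ring
      rw [hrearr]
      have hc : d' i - d i = (if i = a ∨ i = b then (1:ℝ) else 0) := by rw [hcd i]; ring
      have hsum_nonneg : 0 ≤ ∑ j, A i j * (1/Real.sqrt (d j)) :=
        Finset.sum_nonneg fun j _ => mul_nonneg (hApos i j) (by positivity)
      calc (1/Real.sqrt (d i) - 1/Real.sqrt (d' i)) * ∑ j, A i j * (1/Real.sqrt (d j))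
          ≤ ((d' i - d i) / (2 * d i * Real.sqrt δ)) * (d i / Real.sqrt δ) := by
            apply mul_le_mul (hfb i) (hrow i) hsum_nonneg
            · apply div_nonneg (by linarith [hdd' i])
              have := hd0 i; positivity
        _ = (if i = a ∨ i = b then (1:ℝ) else 0) / (2 * δ) := by
            rw [hprod _ _ (by linarith [hdd' i]) (hδd i), hc]
    calc ∑ i, ∑ j, A i j * ((1/Real.sqrt (d i) - 1/Real.sqrt (d' i)) * (1/Real.sqrt (d j)))
        ≤ ∑ i, (if i = a ∨ i = b then (1:ℝ) else 0) / (2 * δ) :=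
          Finset.sum_le_sum fun i _ => step i
      _ = 1 / δ := by rw [← Finset.sum_div, hsum_c]; field_simp
  -- S3
  have hS3 : ∑ i, ∑ j, A i j * ((1/Real.sqrt (d j) - 1/Real.sqrt (d' j)) * (1/Real.sqrt (d' i)))
      ≤ 1 / δ := by
    rw [Finset.sum_comm]
    have step : ∀ j, ∑ i, A i j * ((1/Real.sqrt (d j) - 1/Real.sqrt (d' j)) * (1/Real.sqrt (d' i)))
        ≤ (if j = a ∨ j = b then (1:ℝ) else 0) / (2 * δ) := by
      intro j
      have hrearr : ∑ i, A i j * ((1/Real.sqrt (d j) - 1/Real.sqrt (d' j)) * (1/Real.sqrt (d' i)))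
          = (1/Real.sqrt (d j) - 1/Real.sqrt (d' j)) * ∑ i, A i j * (1/Real.sqrt (d' i)) := by
        rw [Finset.mul_sum]
        exact Finset.sum_congr rfl fun i _ => by ring
      rw [hrearr]
      have hc : d' j - d j = (if j = a ∨ j = b then (1:ℝ) else 0) := by rw [hcd j]; ring
      have hsum_nonneg : 0 ≤ ∑ i, A i j * (1/Real.sqrt (d' i)) :=
        Finset.sum_nonneg fun i _ => mul_nonneg (hApos i j) (by positivity)
      calc (1/Real.sqrt (d j) - 1/Real.sqrt (d' j)) * ∑ i, A i j * (1/Real.sqrt (d' i))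
          ≤ ((d' j - d j) / (2 * d j * Real.sqrt δ)) * (d j / Real.sqrt δ) := by
            apply mul_le_mul (hfb j) (hrow' j) hsum_nonneg
            · apply div_nonneg (by linarith [hdd' j])
              have := hd0 j; positivity
        _ = (if j = a ∨ j = b then (1:ℝ) else 0) / (2 * δ) := by
            rw [hprod _ _ (by linarith [hdd' j]) (hδd j), hc]
    calc ∑ j, ∑ i, A i j * ((1/Real.sqrt (d j) - 1/Real.sqrt (d' j)) * (1/Real.sqrt (d' i)))
        ≤ ∑ j, (if j = a ∨ j = b then (1:ℝ) else 0) / (2 * δ) :=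
          Finset.sum_le_sum fun j _ => step j
      _ = 1 / δ := by rw [← Finset.sum_div, hsum_c]; field_simp
  -- assemble
  calc ∑ i, ∑ j,
        |A i j / (Real.sqrt (d i) * Real.sqrt (d j)) -
          A' i j / (Real.sqrt (d' i) * Real.sqrt (d' j))|
      ≤ ∑ i, ∑ j, ((A' i j - A i j) / (Real.sqrt (d' i) * Real.sqrt (d' j))
        + A i j * ((1/Real.sqrt (d i) - 1/Real.sqrt (d' i)) * (1/Real.sqrt (d j)))
        + A i j * ((1/Real.sqrt (d j) - 1/Real.sqrt (d' j)) * (1/Real.sqrt (d' i)))) :=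
        Finset.sum_le_sum fun i _ => Finset.sum_le_sum fun j _ => hterm i j
    _ = (∑ i, ∑ j, (A' i j - A i j) / (Real.sqrt (d' i) * Real.sqrt (d' j)))
        + (∑ i, ∑ j, A i j * ((1/Real.sqrt (d i) - 1/Real.sqrt (d' i)) * (1/Real.sqrt (d j))))
        + (∑ i, ∑ j, A i j * ((1/Real.sqrt (d j) - 1/Real.sqrt (d' j)) * (1/Real.sqrt (d' i)))) := by
        rw [← Finset.sum_add_distrib, ← Finset.sum_add_distrib]
        exact Finset.sum_congr rfl fun i _ => by
          rw [← Finset.sum_add_distrib, ← Finset.sum_add_distrib]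
    _ ≤ 2 / δ + 1 / δ + 1 / δ := add_le_add (add_le_add hS1 hS2) hS3
    _ ≤ 8 / δ := by
        rw [← add_div, ← add_div]
        (gcongr; norm_num)


/-- Let `G, G'` be edge-adjacent weighted graphs on `n+1`
vertices (their adjacency matrices differ in a single edge of weight 1), with
all degrees at least 1.  Then the entrywise ℓ1 distance between their
normalized adjacency matrices `D^{-1/2} A D^{-1/2}` is at most
`8 / min{d_min(G), d_min(G')}`. -/
theorem stmt_11 (n : ℕ) (A A' : Matrix (Fin (n + 1)) (Fin (n + 1)) ℝ)
    (hA : A.IsSymm) (hA' : A'.IsSymm)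
    (hApos : ∀ i j, 0 ≤ A i j) (hA'pos : ∀ i j, 0 ≤ A' i j)
    (hadj : ∃ a b : Fin (n + 1), a ≠ b ∧
      ((∀ i j, A' i j - A i j =
          if (i = a ∧ j = b) ∨ (i = b ∧ j = a) then (1:ℝ) else 0) ∨
       (∀ i j, A i j - A' i j =
          if (i = a ∧ j = b) ∨ (i = b ∧ j = a) then (1:ℝ) else 0)))
    (hd : ∀ i, 1 ≤ ∑ j, A i j) (hd' : ∀ i, 1 ≤ ∑ j, A' i j) :
    ∑ i, ∑ j,
        |A i j / (Real.sqrt (∑ l, A i l) * Real.sqrt (∑ l, A j l)) -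
          A' i j / (Real.sqrt (∑ l, A' i l) * Real.sqrt (∑ l, A' j l))| ≤
      8 / min (⨅ i, ∑ j, A i j) (⨅ i, ∑ j, A' i j) := by
  obtain ⟨a, b, hab, hcase | hcase⟩ := hadj
  · exact key n A A' hA hApos a b hab hcase hd hd'
  · have h := key n A' A hA' hA'pos a b hab hcase hd' hd
    rw [min_comm] at h
    refine le_trans (le_of_eq ?_) h
    exact Finset.sum_congr rfl fun i _ => Finset.sum_congr rfl fun j _ => abs_sub_comm _ _
end
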